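/- Let X, Y be real Banach spaces, U ⊆ X open, f : U → Y continuous, and Jf a pseudo-Jacobian mapping for f on U satisfying the chain rule condition. If Jf is regular at a point x ∈ U, then for every 0 < α < α_{Jf}(x) there exists an open ball B(x, r) ⊆ U such that: (1) the set V := f(B(x, r)) is open in Y; (2) the restriction of f to B(x, r) is a homeomorphism onto V; and (3) the inverse of this restriction is (1/α)-Lipschitz on V. -/

import Mathlib

open Filter Topology Metric Set Bornology

noncomputable section

/-- Upper right-hand Dini directional derivative of `φ` at `x` in direction `v`. -/
def diniUpper {X : Type*} [NormedAddCommGroup X] [NormedSpace ℝ X]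
    (φ : X → ℝ) (x v : X) : ℝ :=
  Filter.limsup (fun t : ℝ => (φ (x + t • v) - φ x) / t) (𝓝[>] (0 : ℝ))

/-- `J` is a pseudo-Jacobian of `f` at `x`: `J` is a nonempty set of bounded linear
operators such that for every continuous linear functional `p` on `Y` and every
direction `v`, the upper Dini derivative of `p ∘ f` at `x` in direction `v` is bounded
by `sup {p (T v) : T ∈ J}`. -/
def IsPseudoJacobianAt {X Y : Type*} [NormedAddCommGroup X] [NormedSpace ℝ X]
    [NormedAddCommGroup Y] [NormedSpace ℝ Y]
    (f : X → Y) (J : Set (X →L[ℝ] Y)) (x : X) : Prop :=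
  J.Nonempty ∧ ∀ (p : Y →L[ℝ] ℝ) (v : X),
    diniUpper (fun z => p (f z)) x v ≤ sSup ((fun T : X →L[ℝ] Y => p (T v)) '' J)


/-- Clarke generalized directional derivative of `φ` at `y` in direction `w`:
`limsup_{z → y, t → 0⁺} (φ (z + t w) − φ z)/t`. -/
def clarkeDirDeriv {Y : Type*} [NormedAddCommGroup Y] [NormedSpace ℝ Y]
    (φ : Y → ℝ) (y w : Y) : ℝ :=
  Filter.limsup (fun q : Y × ℝ => (φ (q.1 + q.2 • w) - φ q.1) / q.2)
    ((𝓝 y) ×ˢ (𝓝[>] (0 : ℝ)))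

/-- Clarke subdifferential of `φ` at `y`. -/
def clarkeSubdiff {Y : Type*} [NormedAddCommGroup Y] [NormedSpace ℝ Y]
    (φ : Y → ℝ) (y : Y) : Set (Y →L[ℝ] ℝ) :=
  {p | ∀ w : Y, p w ≤ clarkeDirDeriv φ y w}

/-- The set `A_{x,y}(f) = ∂‖·‖(f x − y) ∘ co (Jf x) ⊆ X*`. -/
def pjComp {X Y : Type*} [NormedAddCommGroup X] [NormedSpace ℝ X]
    [NormedAddCommGroup Y] [NormedSpace ℝ Y]
    (f : X → Y) (Jf : X → Set (X →L[ℝ] Y)) (x : X) (y : Y) : Set (X →L[ℝ] ℝ) :=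
  {S | ∃ p ∈ clarkeSubdiff (fun w : Y => ‖w‖) (f x - y),
       ∃ T ∈ convexHull ℝ (Jf x), S = p.comp T}

/-- The pseudo-Jacobian mapping `Jf` satisfies the chain rule condition on `U`:
for every `x ∈ U` and every `y ≠ f x`, the set `A_{x,y}(f)` is weak-star closed,
convex, and is a pseudo-Jacobian at `x` of the function `z ↦ ‖f z − y‖`. -/
def ChainRuleCond {X Y : Type*} [NormedAddCommGroup X] [NormedSpace ℝ X]
    [NormedAddCommGroup Y] [NormedSpace ℝ Y]
    (f : X → Y) (Jf : X → Set (X →L[ℝ] Y)) (U : Set X) : Prop :=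
  ∀ x ∈ U, ∀ y : Y, y ≠ f x →
    IsClosed ((StrongDual.toWeakDual : (X →L[ℝ] ℝ) → WeakDual ℝ X) ''
        pjComp f Jf x y) ∧
    Convex ℝ (pjComp f Jf x y) ∧
    IsPseudoJacobianAt (fun z : X => ‖f z - y‖) (pjComp f Jf x y) x

/-- The co-norm of a bounded linear operator: `//T// = inf {‖T x‖ : ‖x‖ = 1}`. -/
def conorm {X Y : Type*} [NormedAddCommGroup X] [NormedSpace ℝ X]
    [NormedAddCommGroup Y] [NormedSpace ℝ Y] (T : X →L[ℝ] Y) : ℝ :=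
  sInf {c : ℝ | ∃ x : X, ‖x‖ = 1 ∧ c = ‖T x‖}

/-- `T` is an isomorphism of Banach spaces, i.e. a bijective bounded linear operator
with bounded inverse. -/
def IsBanachIso {X Y : Type*} [NormedAddCommGroup X] [NormedSpace ℝ X]
    [NormedAddCommGroup Y] [NormedSpace ℝ Y] (T : X →L[ℝ] Y) : Prop :=
  ∃ e : X ≃L[ℝ] Y, (e : X →L[ℝ] Y) = T

/-- `Jf(B(x, r)) = ⋃_{z ∈ B(x,r)} Jf z`. -/
def pjBall {X Y : Type*} [NormedAddCommGroup X] [NormedSpace ℝ X]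
    [NormedAddCommGroup Y] [NormedSpace ℝ Y]
    (Jf : X → Set (X →L[ℝ] Y)) (x : X) (r : ℝ) : Set (X →L[ℝ] Y) :=
  ⋃ z ∈ Metric.ball x r, Jf z

/-- The regularity index of `Jf` at `x`:
`α_{Jf}(x) = sup_{r > 0} inf {//T// : T ∈ co Jf(B(x,r))}`. -/
def regIndex {X Y : Type*} [NormedAddCommGroup X] [NormedSpace ℝ X]
    [NormedAddCommGroup Y] [NormedSpace ℝ Y]
    (Jf : X → Set (X →L[ℝ] Y)) (x : X) : ℝ :=
  sSup {c : ℝ | ∃ r > 0, c = sInf (conorm '' convexHull ℝ (pjBall Jf x r))}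

/-- `Jf` is regular at `x`: for some `r > 0` every operator in `co Jf(B(x,r))` is an
isomorphism, and the regularity index at `x` is positive. -/
def IsRegularAt {X Y : Type*} [NormedAddCommGroup X] [NormedSpace ℝ X]
    [NormedAddCommGroup Y] [NormedSpace ℝ Y]
    (Jf : X → Set (X →L[ℝ] Y)) (x : X) : Prop :=
  (∃ r > 0, ∀ T ∈ convexHull ℝ (pjBall Jf x r), IsBanachIso T) ∧ 0 < regIndex Jf x

lemma diniUpper_ge {X : Type*} [NormedAddCommGroup X] [NormedSpace ℝ X]
    {φ : X → ℝ} {x v : X} {c : ℝ} (hc : c ≤ 0)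
    (h : ∀ᶠ t in 𝓝[>] (0:ℝ), c ≤ (φ (x + t • v) - φ x) / t) :
    c ≤ diniUpper φ x v := by
  rw [diniUpper, limsup_eq]
  rcases Set.eq_empty_or_nonempty {a : ℝ | ∀ᶠ t in 𝓝[>] (0:ℝ), (φ (x + t • v) - φ x) / t ≤ a}
    with he | hne
  · rw [he, Real.sInf_empty]; exact hc
  · refine le_csInf hne fun a ha => ?_
    rcases (h.and ha).exists with ⟨t, h1, h2⟩
    linarith

lemma frequently_slope_of_diniUpper_le {X : Type*} [NormedAddCommGroup X] [NormedSpace ℝ X]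
    {φ : X → ℝ} {z v : X} {c : ℝ} (h : diniUpper φ z v ≤ c) (hc : c < 0) {r : ℝ} (hr : c < r) :
    ∃ᶠ s in 𝓝[>] (0:ℝ), (φ (z + s • v) - φ z) / s < r := by
  rw [diniUpper, limsup_eq] at h
  set L := {a : ℝ | ∀ᶠ t in 𝓝[>] (0:ℝ), (φ (z + t • v) - φ z) / t ≤ a} with hL
  have hLne : L.Nonempty := by
    by_contra hne
    rw [Set.not_nonempty_iff_eq_empty] at hne
    rw [hne, Real.sInf_empty] at h
    linarith
  have : sInf L < r := lt_of_le_of_lt h hr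
  obtain ⟨a, haL, har⟩ := exists_lt_of_csInf_lt hLne this
  exact ((Filter.Eventually.mono (show ∀ᶠ t in 𝓝[>] (0:ℝ), (φ (z + t • v) - φ z) / t ≤ a from haL) fun t ht => lt_of_le_of_lt ht har)).frequently

lemma conorm_nonneg {X Y : Type*} [NormedAddCommGroup X] [NormedSpace ℝ X]
    [NormedAddCommGroup Y] [NormedSpace ℝ Y] (T : X →L[ℝ] Y) : 0 ≤ conorm T :=
  Real.sInf_nonneg fun c hc => by obtain ⟨x, -, rfl⟩ := hc; exact norm_nonneg _

lemma conorm_mul_le {X Y : Type*} [NormedAddCommGroup X] [NormedSpace ℝ X]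
    [NormedAddCommGroup Y] [NormedSpace ℝ Y] (T : X →L[ℝ] Y) (z : X) :
    conorm T * ‖z‖ ≤ ‖T z‖ := by
  rcases eq_or_ne z 0 with rfl | hz
  · simp
  · have hz' : ‖z‖ ≠ 0 := norm_ne_zero_iff.mpr hz
    have h1 : ‖(‖z‖⁻¹ • z)‖ = 1 := by
      rw [norm_smul, norm_inv, norm_norm, inv_mul_cancel₀ hz']
    have hmem : ‖T (‖z‖⁻¹ • z)‖ ∈ {c : ℝ | ∃ x : X, ‖x‖ = 1 ∧ c = ‖T x‖} := ⟨_, h1, rfl⟩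
    have hbdd : BddBelow {c : ℝ | ∃ x : X, ‖x‖ = 1 ∧ c = ‖T x‖} :=
      ⟨0, fun c hc => by obtain ⟨x, -, rfl⟩ := hc; exact norm_nonneg _⟩
    have := csInf_le hbdd hmem
    have h2 : ‖T (‖z‖⁻¹ • z)‖ = ‖z‖⁻¹ * ‖T z‖ := by
      rw [map_smul, norm_smul, norm_inv, norm_norm]
    rw [h2] at this
    have hzpos : (0:ℝ) < ‖z‖ := norm_pos_iff.mpr hz
    calc conorm T * ‖z‖ ≤ (‖z‖⁻¹ * ‖T z‖) * ‖z‖ := by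
          exact mul_le_mul_of_nonneg_right this hzpos.le
      _ = ‖T z‖ := by field_simp

/-- Ekeland's variational principle (specialized form). -/
lemma ekeland_vp {X : Type*} [NormedAddCommGroup X] [NormedSpace ℝ X] [CompleteSpace X]
    {S : Set X} (hSc : IsClosed S) {g : X → ℝ} (hg : ContinuousOn g S)
    (hg0 : ∀ z ∈ S, 0 ≤ g z) {x₀ : X} (hx₀ : x₀ ∈ S) {ε : ℝ} (hε : 0 < ε) :
    ∃ w ∈ S, g w + ε * ‖w - x₀‖ ≤ g x₀ ∧ ∀ z ∈ S, g w ≤ g z + ε * ‖z - w‖ := by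
  classical
  set D : X → Set X := fun a => {z ∈ S | g z + ε * ‖z - a‖ ≤ g a} with hD
  have hDsub : ∀ a, D a ⊆ S := fun a z hz => hz.1
  have hself : ∀ a ∈ S, a ∈ D a := fun a ha => ⟨ha, by simp⟩
  have htrans : ∀ a b z, b ∈ D a → z ∈ D b → z ∈ D a := by
    rintro a b z ⟨hbS, hb⟩ ⟨hzS, hz⟩
    refine ⟨hzS, ?_⟩
    have h3 : ‖z - a‖ ≤ ‖z - b‖ + ‖b - a‖ := by
      simpa using norm_add_le (z - b) (b - a)
    nlinarith [norm_nonneg (z - b), norm_nonneg (b - a)]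
  have hbddD : ∀ a, BddBelow (g '' D a) := fun a => ⟨0, fun c hc => by
    obtain ⟨z, hz, rfl⟩ := hc; exact hg0 z (hDsub a hz)⟩
  have hex : ∀ (n : ℕ) (a : X), a ∈ S → ∃ z, z ∈ D a ∧ g z ≤ sInf (g '' D a) + (1/2)^n := by
    intro n a ha
    obtain ⟨c, hc, hclt⟩ := Real.lt_sInf_add_pos (Set.Nonempty.image g ⟨a, hself a ha⟩)
      (show (0:ℝ) < (1/2)^n by positivity)
    obtain ⟨z, hzD, rfl⟩ := hc
    exact ⟨z, hzD, hclt.le⟩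
  choose! F hF1 hF2 using hex
  set u : ℕ → X := fun n => Nat.rec x₀ (fun k a => F k a) n with hu
  have hu0 : u 0 = x₀ := rfl
  have huS : ∀ n, u n ∈ S ∧ u (n+1) ∈ D (u n) ∧
      g (u (n+1)) ≤ sInf (g '' D (u n)) + (1/2)^n := by
    intro n
    induction n with
    | zero => exact ⟨hx₀, hF1 0 x₀ hx₀, hF2 0 x₀ hx₀⟩
    | succ k ih =>
      have h1 : u (k+1) ∈ S := hDsub _ ih.2.1
      exact ⟨h1, hF1 (k+1) _ h1, hF2 (k+1) _ h1⟩
  have hchain : ∀ n m, n ≤ m → u m ∈ D (u n) := by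
    intro n m hnm
    induction m with
    | zero => simp only [Nat.le_zero] at hnm; subst hnm; exact hself _ hx₀
    | succ k ih =>
      rcases Nat.lt_or_ge n (k+1) with h | h
      · exact htrans _ _ _ (ih (Nat.lt_succ_iff.mp h)) (huS k).2.1
      · have : n = k + 1 := le_antisymm hnm h
        subst this; exact hself _ (huS k).2.1.1
  have hkey : ∀ n m, n + 1 ≤ m → ε * ‖u m - u (n+1)‖ ≤ (1/2)^n := by
    intro n m hm
    have h1 : u m ∈ D (u (n+1)) := hchain _ _ hm
    have h2 : u m ∈ D (u n) := hchain _ _ (le_trans (Nat.le_succ n) hm)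
    have h3 : sInf (g '' D (u n)) ≤ g (u m) := csInf_le (hbddD _) ⟨u m, h2, rfl⟩
    have h4 := (huS n).2.2
    have h5 := h1.2
    linarith
  have hcauchy : CauchySeq u := by
    rw [Metric.cauchySeq_iff']
    intro η hη
    obtain ⟨n, hn⟩ := exists_pow_lt_of_lt_one (mul_pos hε hη) (by norm_num : (1:ℝ)/2 < 1)
    refine ⟨n + 1, fun m hm => ?_⟩
    have := hkey n m hm
    rw [dist_eq_norm]
    nlinarith
  obtain ⟨w, hwlim⟩ := cauchySeq_tendsto_of_complete hcauchy
  have hwS : w ∈ S := hSc.mem_of_tendsto hwlim (Filter.Eventually.of_forall fun n => (huS n).1)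
  have hglim : Filter.Tendsto (fun n => g (u n)) Filter.atTop (𝓝 (g w)) := by
    have : Filter.Tendsto u Filter.atTop (𝓝[S] w) := by
      rw [tendsto_nhdsWithin_iff]
      exact ⟨hwlim, Filter.Eventually.of_forall fun n => (huS n).1⟩
    exact (hg w hwS).tendsto.comp this
  have hwD : ∀ n, g w + ε * ‖w - u n‖ ≤ g (u n) := by
    intro n
    have hle : ∀ m, n ≤ m → g (u m) + ε * ‖u m - u n‖ ≤ g (u n) := fun m hm => (hchain n m hm).2
    have htend : Filter.Tendsto (fun m => g (u m) + ε * ‖u m - u n‖) Filter.atTop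
        (𝓝 (g w + ε * ‖w - u n‖)) := by
      apply Filter.Tendsto.add hglim
      exact (Filter.Tendsto.const_mul ε (((hwlim.sub tendsto_const_nhds).norm)))
    exact le_of_tendsto htend (Filter.eventually_atTop.mpr ⟨n, hle⟩)
  refine ⟨w, hwS, by simpa [hu0] using hwD 0, ?_⟩
  intro z hz
  by_contra hcon
  push_neg at hcon
  have hzD : ∀ n, z ∈ D (u n) := by
    intro n
    refine ⟨hz, ?_⟩
    have h1 : ‖z - u n‖ ≤ ‖z - w‖ + ‖w - u n‖ := by
      simpa using norm_add_le (z - w) (w - u n)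
    have h2 := hwD n
    nlinarith [norm_nonneg (z - w)]
  have hzn : ∀ n, g w ≤ g z + (1/2)^n := by
    intro n
    have h1 : sInf (g '' D (u n)) ≤ g z := csInf_le (hbddD _) ⟨z, hzD n, rfl⟩
    have h2 := (huS n).2.2
    have h3 : g w + ε * ‖w - u (n+1)‖ ≤ g (u (n+1)) := hwD (n+1)
    nlinarith [norm_nonneg (w - u (n+1))]
  have : g w ≤ g z := by
    have htend : Filter.Tendsto (fun n : ℕ => g z + (1/2)^n) Filter.atTop (𝓝 (g z + 0)) :=
      Filter.Tendsto.const_add _ (tendsto_pow_atTop_nhds_zero_of_lt_one (by norm_num) (by norm_num))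
    have := ge_of_tendsto htend (Filter.Eventually.of_forall hzn)
    linarith
  nlinarith [norm_nonneg (z - w)]

lemma limsup_le_of_bounds {ι : Type*} {l : Filter ι} [l.NeBot] {F : ι → ℝ} {c C : ℝ}
    (hb : ∀ᶠ q in l, F q ≤ c) (hlow : ∀ᶠ q in l, C ≤ F q) : Filter.limsup F l ≤ c := by
  rw [limsup_eq]
  refine csInf_le ⟨C, fun a ha => ?_⟩ hb
  rcases ((ha : ∀ᶠ q in l, F q ≤ a).and hlow).exists with ⟨q, h1, h2⟩
  linarith

lemma eventually_pos_snd {Y : Type*} [NormedAddCommGroup Y] [NormedSpace ℝ Y] (y : Y) :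
    ∀ᶠ q : Y × ℝ in (𝓝 y) ×ˢ (𝓝[>] (0:ℝ)), 0 < q.2 :=
  Filter.Eventually.prod_inr (eventually_mem_nhdsWithin.mono fun t ht => ht) _

lemma clarkeDirDeriv_norm_le {Y : Type*} [NormedAddCommGroup Y] [NormedSpace ℝ Y] (y w : Y) :
    clarkeDirDeriv (fun w : Y => ‖w‖) y w ≤ ‖w‖ := by
  have hlow : ∀ᶠ q : Y × ℝ in (𝓝 y) ×ˢ (𝓝[>] (0:ℝ)),
      -‖w‖ ≤ (‖q.1 + q.2 • w‖ - ‖q.1‖) / q.2 := by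
    filter_upwards [eventually_pos_snd y] with q hq
    rw [le_div_iff₀ hq]
    have h1 : ‖q.1‖ - ‖q.1 + q.2 • w‖ ≤ ‖q.2 • w‖ := by
      have := norm_sub_norm_le q.1 (q.1 + q.2 • w)
      simpa using this.trans_eq (by rw [show q.1 - (q.1 + q.2 • w) = -(q.2 • w) by abel,
        norm_neg])
    rw [norm_smul, Real.norm_eq_abs, abs_of_pos hq] at h1
    nlinarith
  have hb : ∀ᶠ q : Y × ℝ in (𝓝 y) ×ˢ (𝓝[>] (0:ℝ)),
      (‖q.1 + q.2 • w‖ - ‖q.1‖) / q.2 ≤ ‖w‖ := by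
    filter_upwards [eventually_pos_snd y] with q hq
    rw [div_le_iff₀ hq]
    have h1 : ‖q.1 + q.2 • w‖ - ‖q.1‖ ≤ ‖q.2 • w‖ := by
      have := norm_add_le q.1 (q.2 • w); linarith
    rw [norm_smul, Real.norm_eq_abs, abs_of_pos hq] at h1
    nlinarith
  exact limsup_le_of_bounds hb hlow

lemma clarkeDirDeriv_norm_neg_self {Y : Type*} [NormedAddCommGroup Y] [NormedSpace ℝ Y]
    (u₀ : Y) : clarkeDirDeriv (fun w : Y => ‖w‖) u₀ (-u₀) ≤ -‖u₀‖ := by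
  refine le_of_forall_pos_le_add fun η hη => ?_
  have hlow : ∀ᶠ q : Y × ℝ in (𝓝 u₀) ×ˢ (𝓝[>] (0:ℝ)),
      -‖u₀‖ ≤ (‖q.1 + q.2 • (-u₀)‖ - ‖q.1‖) / q.2 := by
    filter_upwards [eventually_pos_snd u₀] with q hq
    rw [le_div_iff₀ hq]
    have h1 : ‖q.1‖ - ‖q.1 + q.2 • (-u₀)‖ ≤ q.2 * ‖u₀‖ := by
      have h := norm_sub_norm_le q.1 (q.1 + q.2 • (-u₀))
      have hiden : q.1 - (q.1 + q.2 • (-u₀)) = q.2 • u₀ := by module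
      rw [hiden, norm_smul, Real.norm_eq_abs, abs_of_pos hq] at h
      exact h
    nlinarith
  have hball : ∀ᶠ q : Y × ℝ in (𝓝 u₀) ×ˢ (𝓝[>] (0:ℝ)),
      q.1 ∈ Metric.ball u₀ (η/2) ∧ q.2 ∈ Set.Ioo (0:ℝ) 1 := by
    refine Filter.Eventually.and ?_ ?_
    · exact Filter.Eventually.prod_inl (Metric.ball_mem_nhds u₀ (by linarith)) _
    · exact Filter.Eventually.prod_inr (Ioo_mem_nhdsGT_of_mem ⟨le_refl _, one_pos⟩) _
  have hb : ∀ᶠ q : Y × ℝ in (𝓝 u₀) ×ˢ (𝓝[>] (0:ℝ)),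
      (‖q.1 + q.2 • (-u₀)‖ - ‖q.1‖) / q.2 ≤ -‖u₀‖ + η := by
    filter_upwards [hball] with q hq
    obtain ⟨hq1, hq2⟩ := hq
    rw [div_le_iff₀ hq2.1]
    have hid : q.1 + q.2 • (-u₀) = (1 - q.2) • q.1 + q.2 • (q.1 - u₀) := by module
    have h1 : ‖q.1 + q.2 • (-u₀)‖ ≤ (1 - q.2) * ‖q.1‖ + q.2 * ‖q.1 - u₀‖ := by
      rw [hid]
      refine (norm_add_le _ _).trans ?_
      rw [norm_smul, norm_smul, Real.norm_eq_abs, Real.norm_eq_abs,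
        abs_of_nonneg (by linarith [hq2.2] : (0:ℝ) ≤ 1 - q.2), abs_of_pos hq2.1]
    have h2 : ‖q.1 - u₀‖ < η/2 := by
      rw [Metric.mem_ball, dist_eq_norm] at hq1; exact hq1
    have h3 : ‖u₀‖ - η/2 ≤ ‖q.1‖ := by
      have := norm_sub_norm_le u₀ q.1
      rw [show u₀ - q.1 = -(q.1 - u₀) by abel, norm_neg] at this
      linarith
    nlinarith [hq2.1, hq2.2]
  have := limsup_le_of_bounds hb hlow
  exact this

lemma clarke_norm_props {Y : Type*} [NormedAddCommGroup Y] [NormedSpace ℝ Y]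
    {u₀ : Y} {p : Y →L[ℝ] ℝ} (hp : p ∈ clarkeSubdiff (fun w : Y => ‖w‖) u₀) :
    (∀ w, p w ≤ ‖w‖) ∧ p u₀ = ‖u₀‖ := by
  have h1 : ∀ w, p w ≤ ‖w‖ := fun w => (hp w).trans (clarkeDirDeriv_norm_le u₀ w)
  refine ⟨h1, le_antisymm (h1 u₀) ?_⟩
  have h2 : p (-u₀) ≤ -‖u₀‖ := (hp (-u₀)).trans (clarkeDirDeriv_norm_neg_self u₀)
  rw [map_neg] at h2
  linarith

lemma weakdual_repr {X : Type*} [NormedAddCommGroup X] [NormedSpace ℝ X]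
    (φ : WeakDual ℝ X →L[ℝ] ℝ) : ∃ v : X, ∀ S : WeakDual ℝ X, φ S = S v := by
  classical
  have hemb : IsInducing (fun (S : WeakDual ℝ X) (v : X) => S v) := by
    exact (WeakBilin.isEmbedding (B := topDualPairing ℝ X)
      ContinuousLinearMap.coe_injective).toIsInducing
  have hU₀ : φ ⁻¹' (Metric.ball (0:ℝ) 1) ∈ 𝓝 (0 : WeakDual ℝ X) := by
    have := φ.continuous.continuousAt (x := 0)
    rw [ContinuousAt, map_zero] at this
    exact this (Metric.ball_mem_nhds _ one_pos)
  rw [hemb.nhds_eq_comap, Filter.mem_comap] at hU₀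
  obtain ⟨t, ht, hsub⟩ := hU₀
  rw [nhds_pi, Filter.mem_pi] at ht
  obtain ⟨I, hIfin, ts, hts, hsub2⟩ := ht
  have hker : ∀ S : WeakDual ℝ X, (∀ v ∈ I, S v = 0) → φ S = 0 := by
    intro S hS
    by_contra hφS
    obtain ⟨n, hn⟩ := exists_nat_one_div_lt (abs_pos.mpr hφS)
    set S' : WeakDual ℝ X := ((n : ℝ) + 1) • S with hS'
    have hmem : (fun v : X => S' v) ∈ I.pi ts := by
      intro v hv
      have : S' v = 0 := by
        rw [hS']
        show ((n : ℝ) + 1) * S v = 0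
        rw [hS v hv, mul_zero]
      show S' v ∈ ts v
      rw [this]
      exact mem_of_mem_nhds (hts v)
    have : S' ∈ φ ⁻¹' (Metric.ball (0:ℝ) 1) := hsub (hsub2 hmem)
    have h1 : |φ S'| < 1 := by
      simpa [Real.dist_eq] using this
    have h2 : φ S' = ((n : ℝ) + 1) * φ S := by
      rw [hS', map_smul]; rfl
    rw [h2, abs_mul, abs_of_pos (by positivity : (0:ℝ) < (n:ℝ)+1)] at h1
    rw [div_lt_iff₀ (by positivity : (0:ℝ) < (n:ℝ)+1)] at hn
    nlinarith [abs_nonneg (φ S)]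
  haveI : Finite I := hIfin
  let L : I → (WeakDual ℝ X →ₗ[ℝ] ℝ) := fun v =>
    { toFun := fun S => S (v : X)
      map_add' := fun S T => rfl
      map_smul' := fun c S => rfl }
  have hle : ⨅ i, LinearMap.ker (L i) ≤ LinearMap.ker (φ : WeakDual ℝ X →ₗ[ℝ] ℝ) := by
    intro S hSmem
    rw [Submodule.mem_iInf] at hSmem
    have : ∀ v ∈ I, S v = 0 := by
      intro v hv
      exact hSmem ⟨v, hv⟩
    exact hker S this
  have hspan := mem_span_of_iInf_ker_le_ker hle
  haveI : Fintype I := hIfin.fintype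
  rw [Submodule.mem_span_range_iff_exists_fun] at hspan
  obtain ⟨c, hc⟩ := hspan
  refine ⟨∑ i : I, c i • (i : X), fun S => ?_⟩
  have h1 : φ S = (∑ i : I, c i • L i) S := by rw [hc]; rfl
  rw [h1]
  rw [LinearMap.sum_apply]
  have h2 : S (∑ i : I, c i • (i : X)) = ∑ i : I, c i * S (i : X) := by
    rw [map_sum]
    congr 1
    ext i
    rw [map_smul]
    rfl
  rw [h2]
  congr 1

lemma map_add_nhdsGT (t : ℝ) : Filter.map (fun s : ℝ => t + s) (𝓝[>] (0:ℝ)) = 𝓝[>] t := by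
  have h := (Homeomorph.addLeft t).isEmbedding.map_nhdsWithin_eq (Set.Ioi (0:ℝ)) 0
  simpa [image_const_add_Ioi] using h

/-- On a ball where all convex-hull pseudo-Jacobian operators have co-norm at least `β > 0`,
the map `f` is injective. -/
lemma inj_aux {X Y : Type*} [NormedAddCommGroup X] [NormedSpace ℝ X]
    [NormedAddCommGroup Y] [NormedSpace ℝ Y]
    {U : Set X} {f : X → Y} (hf : ContinuousOn f U)
    {Jf : X → Set (X →L[ℝ] Y)} (hJf : ∀ z ∈ U, IsPseudoJacobianAt f (Jf z) z)
    {x : X} {R β : ℝ} (hβ : 0 < β)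
    (hRU : Metric.ball x R ⊆ U)
    (hconorm : ∀ T ∈ convexHull ℝ (pjBall Jf x R), β ≤ conorm T)
    {u w : X} (hu : u ∈ Metric.ball x R) (hw : w ∈ Metric.ball x R)
    (hfe : f u = f w) : u = w := by
  by_contra hne
  set d : X := w - u with hd
  have hdne : d ≠ 0 := sub_ne_zero.mpr (fun h => hne h.symm)
  have hdpos : 0 < ‖d‖ := norm_pos_iff.mpr hdne
  -- the segment lies in the ball
  have hseg : ∀ t : ℝ, t ∈ Set.Icc (0:ℝ) 1 → u + t • d ∈ Metric.ball x R := by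
    intro t ht
    have hid : u + t • d - x = (1 - t) • (u - x) + t • (w - x) := by
      rw [hd]; module
    rw [Metric.mem_ball, dist_eq_norm, hid]
    have h1 : ‖(1 - t) • (u - x) + t • (w - x)‖ ≤ (1-t) * ‖u - x‖ + t * ‖w - x‖ := by
      refine (norm_add_le _ _).trans ?_
      rw [norm_smul, norm_smul, Real.norm_eq_abs, Real.norm_eq_abs,
        abs_of_nonneg (by linarith [ht.2]), abs_of_nonneg ht.1]
    have hu' : ‖u - x‖ < R := by rw [Metric.mem_ball, dist_eq_norm] at hu; exact hu
    have hw' : ‖w - x‖ < R := by rw [Metric.mem_ball, dist_eq_norm] at hw; exact hw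
    rcases le_total ‖u - x‖ ‖w - x‖ with hc | hc
    · nlinarith [mul_nonneg (by linarith [ht.2] : (0:ℝ) ≤ 1 - t) (by linarith : (0:ℝ) ≤ ‖w - x‖ - ‖u - x‖)]
    · nlinarith [mul_nonneg ht.1 (by linarith : (0:ℝ) ≤ ‖u - x‖ - ‖w - x‖)]
  -- the set of directional images
  set K : Set Y := (fun T : X →L[ℝ] Y => T d) '' (convexHull ℝ (pjBall Jf x R)) with hK
  have hKconv : Convex ℝ K := by
    have : Convex ℝ (convexHull ℝ (pjBall Jf x R)) := convex_convexHull ℝ _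
    exact this.linear_image
      { toFun := fun T : X →L[ℝ] Y => T d
        map_add' := fun S T => rfl
        map_smul' := fun c T => rfl }
  have hKnorm : ∀ q ∈ closure K, β * ‖d‖ ≤ ‖q‖ := by
    intro q hq
    have hcl : closure K ⊆ {q : Y | β * ‖d‖ ≤ ‖q‖} := by
      refine closure_minimal ?_ (isClosed_le continuous_const continuous_norm)
      rintro q' ⟨T, hT, rfl⟩
      exact le_trans (mul_le_mul_of_nonneg_right (hconorm T hT) (norm_nonneg d))
        (conorm_mul_le T d)
    exact hcl hq
  have h0K : (0 : Y) ∉ closure K := by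
    intro h
    have := hKnorm 0 h
    rw [norm_zero] at this
    nlinarith
  obtain ⟨p, s, hps, hs0⟩ := geometric_hahn_banach_closed_point
    (hKconv.closure) isClosed_closure h0K
  rw [map_zero] at hs0
  -- ψ is the scalar function along the segment
  set ψ : ℝ → ℝ := fun t => p (f (u + t • d)) with hψ
  have hψcont : ContinuousOn ψ (Set.Icc 0 1) := by
    refine p.continuous.comp_continuousOn (hf.comp ?_ ?_)
    · exact (continuous_const.add (continuous_id.smul continuous_const)).continuousOn
    · intro t ht
      exact hRU (hseg t ht)
  have hdini : ∀ t ∈ Set.Ico (0:ℝ) 1,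
      diniUpper (fun z => p (f z)) (u + t • d) d ≤ s := by
    intro t ht
    have htmem : u + t • d ∈ Metric.ball x R := hseg t ⟨ht.1, ht.2.le⟩
    have hzU : u + t • d ∈ U := hRU htmem
    have h2 := (hJf _ hzU).2 p d
    refine h2.trans ?_
    refine csSup_le (((hJf _ hzU).1).image _) ?_
    rintro b ⟨T, hT, rfl⟩
    have hTK : T d ∈ K := ⟨T, subset_convexHull ℝ _ (Set.mem_biUnion htmem hT), rfl⟩
    exact (hps _ (subset_closure hTK)).le
  -- apply the fencing lemma
  have hmain : ψ 1 ≤ ψ 0 + s * 1 := by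
    have := image_le_of_liminf_slope_right_le_deriv_boundary (f := ψ) (a := 0) (b := 1)
      hψcont (B := fun t => ψ 0 + s * t) (B' := fun _ => s)
      (by simp)
      (by fun_prop)
      (fun t ht => ((hasDerivAt_const t (ψ 0)).add ((hasDerivAt_id t).const_mul s)).hasDerivWithinAt.congr_deriv (by ring))
      ?_ (by norm_num : (1:ℝ) ∈ Set.Icc (0:ℝ) 1)
    · simpa using this
    · intro t ht r hr
      have hfreq := frequently_slope_of_diniUpper_le (φ := fun z => p (f z))
        (z := u + t • d) (v := d) (hdini t ht) hs0 hr
      have heq : ∀ τ : ℝ, (fun z => p (f z)) (u + t • d + τ • d) = ψ (t + τ) := by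
        intro τ
        have : u + t • d + τ • d = u + (t + τ) • d := by module
        rw [this]
      rw [← map_add_nhdsGT t, Filter.frequently_map]
      refine hfreq.mono fun τ hτ => ?_
      rw [slope_def_field]
      have h2 : t + τ - t = τ := by ring
      rw [h2, ← heq τ]
      exact hτ
  have h10 : ψ 1 = ψ 0 := by
    simp only [hψ, one_smul, zero_smul, add_zero]
    rw [show u + d = w by rw [hd]; abel, hfe]
  rw [h10] at hmain
  linarith

set_option maxHeartbeats 1000000 in
lemma surj_aux {X Y : Type*} [NormedAddCommGroup X] [NormedSpace ℝ X] [CompleteSpace X]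
    [NormedAddCommGroup Y] [NormedSpace ℝ Y]
    {U : Set X} {f : X → Y} (hf : ContinuousOn f U)
    {Jf : X → Set (X →L[ℝ] Y)} (hcrc : ChainRuleCond f Jf U)
    {x : X} {R β : ℝ}
    (hRU : Metric.ball x R ⊆ U)
    (hiso : ∀ T ∈ convexHull ℝ (pjBall Jf x R), IsBanachIso T)
    (hconorm : ∀ T ∈ convexHull ℝ (pjBall Jf x R), β ≤ conorm T)
    {ε : ℝ} (hε : 0 < ε) (hεβ : ε < β)
    {c : X} {ρ : ℝ} (hρ : 0 < ρ) (hball : Metric.closedBall c ρ ⊆ Metric.ball x R)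
    {y : Y} (hy : ‖f c - y‖ < ε * ρ) :
    ∃ w : X, ‖w - c‖ ≤ ‖f c - y‖ / ε ∧ f w = y := by
  set g : X → ℝ := fun z => ‖f z - y‖ with hg
  set S : Set X := Metric.closedBall c ρ with hS
  have hSU : S ⊆ U := fun z hz => hRU (hball hz)
  have hgc : ContinuousOn g S := ((hf.mono hSU).sub continuousOn_const).norm
  have hg0 : ∀ z ∈ S, 0 ≤ g z := fun z _ => norm_nonneg _
  have hcS : c ∈ S := Metric.mem_closedBall_self hρ.le
  obtain ⟨w, hwS, hw1, hw2⟩ := ekeland_vp Metric.isClosed_closedBall hgc hg0 hcS hε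
  have hgw0 : 0 ≤ g w := hg0 w hwS
  have hwc : ‖w - c‖ ≤ g c / ε := by
    rw [le_div_iff₀ hε]; nlinarith
  by_cases hfw : f w = y
  · exact ⟨w, by simpa [hg] using hwc, hfw⟩
  exfalso
  have hyne : y ≠ f w := fun h => hfw h.symm
  have hwball : w ∈ Metric.ball x R := hball hwS
  have hwU : w ∈ U := hRU hwball
  obtain ⟨hclA, hconvA, hPJA⟩ := hcrc w hwU y hyne
  have hwint : ‖w - c‖ < ρ := lt_of_le_of_lt hwc (by rw [div_lt_iff₀ hε]; linarith [hy])
  -- Step 1 : lower bound on the Dini derivative from the Ekeland inequality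
  have hstep1 : ∀ v : X, -(ε * ‖v‖) ≤ diniUpper (fun z => ‖f z - y‖) w v := by
    intro v
    have hnn : -(ε * ‖v‖) ≤ 0 := neg_nonpos.mpr (by positivity)
    refine diniUpper_ge hnn ?_
    have hδ : 0 < (ρ - ‖w - c‖) / (‖v‖ + 1) := by
      apply div_pos (by linarith) (by positivity)
    filter_upwards [Ioo_mem_nhdsGT_of_mem
      (Set.mem_Ico.mpr ⟨le_refl (0:ℝ), hδ⟩)] with t ht
    obtain ⟨ht0, htδ⟩ := ht
    have hzS : w + t • v ∈ S := by
      rw [hS, Metric.mem_closedBall, dist_eq_norm]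
      have h1 : ‖w + t • v - c‖ ≤ ‖w - c‖ + t * ‖v‖ := by
        calc ‖w + t • v - c‖ = ‖(w - c) + t • v‖ := by rw [show w + t • v - c = (w - c) + t • v by abel]
          _ ≤ ‖w - c‖ + ‖t • v‖ := norm_add_le _ _
          _ = ‖w - c‖ + t * ‖v‖ := by
              rw [norm_smul, Real.norm_eq_abs, abs_of_pos ht0]
      have h2 : t * ‖v‖ < ρ - ‖w - c‖ := by
        calc t * ‖v‖ ≤ t * (‖v‖ + 1) := by nlinarith [norm_nonneg v]
          _ < (ρ - ‖w - c‖) / (‖v‖ + 1) * (‖v‖ + 1) := by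
              apply mul_lt_mul_of_pos_right htδ (by positivity)
          _ = ρ - ‖w - c‖ := by field_simp
      linarith
    have h3 := hw2 _ hzS
    have h4 : ‖w + t • v - w‖ = t * ‖v‖ := by
      rw [show w + t • v - w = t • v by abel, norm_smul, Real.norm_eq_abs, abs_of_pos ht0]
    rw [h4] at h3
    rw [le_div_iff₀ ht0]
    show -(ε * ‖v‖) * t ≤ g (w + t • v) - g w
    nlinarith
  -- Step 2 : the pseudo-Jacobian upper bound
  have hstep2 : ∀ v : X, -(ε * ‖v‖) ≤
      sSup ((fun S' : X →L[ℝ] ℝ => S' v) '' pjComp f Jf w y) := by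
    intro v
    have h1 := hPJA.2 (ContinuousLinearMap.id ℝ ℝ) v
    simp only [ContinuousLinearMap.coe_id', id_eq] at h1
    exact le_trans (hstep1 v) h1
  -- Step 3 : every element of `pjComp` has norm at least `β`
  have hstep3 : ∀ S' ∈ pjComp f Jf w y, β ≤ ‖S'‖ := by
    rintro S' ⟨p, hp, T, hT, rfl⟩
    have hJfw : Jf w ⊆ pjBall Jf x R := fun T' hT' => Set.mem_biUnion hwball hT'
    have hTball : T ∈ convexHull ℝ (pjBall Jf x R) := convexHull_mono hJfw hT
    obtain ⟨e, he⟩ := hiso T hTball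
    have hcoT := hconorm T hTball
    obtain ⟨hple, hpu⟩ := clarke_norm_props hp
    set u₀ : Y := f w - y with hu₀
    have hu₀ne : u₀ ≠ 0 := sub_ne_zero.mpr hfw
    have hu₀pos : 0 < ‖u₀‖ := norm_pos_iff.mpr hu₀ne
    set w' : X := e.symm u₀ with hw'
    have hTw' : T w' = u₀ := by rw [← he]; exact e.apply_symm_apply u₀
    have hw'norm : β * ‖w'‖ ≤ ‖u₀‖ := by
      calc β * ‖w'‖ ≤ conorm T * ‖w'‖ := mul_le_mul_of_nonneg_right hcoT (norm_nonneg _)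
        _ ≤ ‖T w'‖ := conorm_mul_le T w'
        _ = ‖u₀‖ := by rw [hTw']
    have hw'ne : w' ≠ 0 := by
      intro h
      apply hu₀ne
      rw [← hTw', h, map_zero]
    have hw'pos : 0 < ‖w'‖ := norm_pos_iff.mpr hw'ne
    have hval : (p.comp T) w' = ‖u₀‖ := by
      rw [ContinuousLinearMap.comp_apply, hTw', hpu]
    have hle := (p.comp T).le_opNorm w'
    rw [show ‖(p.comp T) w'‖ = ‖u₀‖ by rw [hval, Real.norm_eq_abs, abs_of_pos hu₀pos]] at hle
    have hβ : 0 < β := lt_trans hε hεβ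
    nlinarith
  -- Step 4 : separation in the weak-star dual
  set ε' : ℝ := (ε + β) / 2 with hε'
  have hεε' : ε < ε' := by rw [hε']; linarith
  have hε'β : ε' < β := by rw [hε']; linarith
  have hε'pos : 0 < ε' := lt_trans hε hεε'
  set A : Set (X →L[ℝ] ℝ) := pjComp f Jf w y with hA
  set K : Set (WeakDual ℝ X) :=
    WeakDual.toStrongDual ⁻¹' Metric.closedBall (0 : StrongDual ℝ X) ε' with hK
  have hKcomp : IsCompact K := WeakDual.isCompact_closedBall (𝕜 := ℝ) 0 ε'
  have hKconv : Convex ℝ K := by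
    have h1 : Convex ℝ (Metric.closedBall (0 : StrongDual ℝ X) ε') :=
      convex_closedBall _ _
    exact h1.linear_preimage (WeakDual.toStrongDual : WeakDual ℝ X ≃ₗ[ℝ] _).toLinearMap
  set C : Set (WeakDual ℝ X) := StrongDual.toWeakDual '' A with hC
  have hCconv : Convex ℝ C :=
    hconvA.linear_image (StrongDual.toWeakDual : _ ≃ₗ[ℝ] WeakDual ℝ X).toLinearMap
  have hCne : C.Nonempty := hPJA.1.image _
  have hdisj : Disjoint K C := by
    rw [Set.disjoint_left]
    rintro a haK ⟨S', hS', rfl⟩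
    have h1 : ‖S'‖ ≤ ε' := by
      have := haK
      rw [hK, Set.mem_preimage, Metric.mem_closedBall, dist_zero_right] at this
      exact this
    have h2 := hstep3 S' hS'
    linarith
  haveI : LocallyConvexSpace ℝ (WeakDual ℝ X) :=
    WeakBilin.locallyConvexSpace (B := topDualPairing ℝ X)
  obtain ⟨φ, u', v', hK', huv, hC'⟩ :=
    geometric_hahn_banach_compact_closed hKconv hKcomp hCconv hclA hdisj
  obtain ⟨v₀, hv₀⟩ := weakdual_repr φ
  have h0K : (StrongDual.toWeakDual (0 : StrongDual ℝ X)) ∈ K := by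
    rw [hK, Set.mem_preimage]
    simpa using hε'pos.le
  have hu'pos : 0 < u' := by
    have := hK' _ h0K
    rw [hv₀] at this
    exact this
  have hv₀ne : v₀ ≠ 0 := by
    intro h
    obtain ⟨b, hb⟩ := hCne
    have h1 := hC' b hb
    rw [hv₀, h, map_zero] at h1
    linarith
  obtain ⟨g₀, hg₀n, hg₀v⟩ := exists_dual_vector ℝ v₀ (norm_ne_zero_iff.mpr hv₀ne)
  have hεv : ε' * ‖v₀‖ < u' := by
    have hmem : StrongDual.toWeakDual (ε' • g₀) ∈ K := by
      rw [hK, Set.mem_preimage]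
      simp only [Metric.mem_closedBall, dist_zero_right]
      rw [show WeakDual.toStrongDual (StrongDual.toWeakDual (ε' • g₀)) = ε' • g₀ from rfl]
      rw [norm_smul, Real.norm_eq_abs, abs_of_pos hε'pos, hg₀n, mul_one]
    have h1 := hK' _ hmem
    rw [hv₀] at h1
    have h2 : (StrongDual.toWeakDual (ε' • g₀)) v₀ = ε' * ‖v₀‖ := by
      rw [show ((StrongDual.toWeakDual (ε' • g₀)) : X → ℝ) v₀ = (ε' • g₀) v₀ from rfl]
      rw [ContinuousLinearMap.smul_apply, hg₀v]
      norm_num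
    rw [h2] at h1
    exact h1
  have hCA : ∀ S' ∈ A, v' < S' v₀ := by
    intro S' hS'
    have h1 := hC' (StrongDual.toWeakDual S') ⟨S', hS', rfl⟩
    rw [hv₀] at h1
    exact h1
  have hsupA : sSup ((fun S' : X →L[ℝ] ℝ => S' (-v₀)) '' A) ≤ -v' := by
    refine csSup_le (hPJA.1.image _) ?_
    rintro b ⟨S', hS', rfl⟩
    have h1 := hCA S' hS'
    have h2 : S' (-v₀) = -(S' v₀) := map_neg S' v₀
    show S' (-v₀) ≤ -v'
    rw [h2]
    linarith
  have hfinal := le_trans (hstep2 (-v₀)) hsupA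
  rw [norm_neg] at hfinal
  have hv₀pos : 0 < ‖v₀‖ := norm_pos_iff.mpr hv₀ne
  nlinarith

/-- Local inversion theorem: if `Jf` satisfies the chain rule condition and is regular
at `x ∈ U`, then for every `0 < α < α_{Jf}(x)` there is a ball `B(x, r) ⊆ U` such that
`f(B(x, r))` is open, `f` restricted to `B(x, r)` is a homeomorphism onto its image
(it is continuous, injective and open), and the inverse is `(1/α)`-Lipschitz. -/
theorem local_inversion
    {X Y : Type*} [NormedAddCommGroup X] [NormedSpace ℝ X] [CompleteSpace X]
    [NormedAddCommGroup Y] [NormedSpace ℝ Y] [CompleteSpace Y]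
    {U : Set X} (hUopen : IsOpen U)
    {f : X → Y} (hf : ContinuousOn f U)
    {Jf : X → Set (X →L[ℝ] Y)} (hJf : ∀ z ∈ U, IsPseudoJacobianAt f (Jf z) z)
    (hcrc : ChainRuleCond f Jf U)
    {x : X} (hx : x ∈ U) (hreg : IsRegularAt Jf x) :
    ∀ α : ℝ, 0 < α → α < regIndex Jf x →
      ∃ r > 0, Metric.ball x r ⊆ U ∧
        IsOpen (f '' Metric.ball x r) ∧
        (∀ W : Set X, W ⊆ Metric.ball x r → IsOpen W → IsOpen (f '' W)) ∧
        Set.InjOn f (Metric.ball x r) ∧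
        ∀ u ∈ Metric.ball x r, ∀ v ∈ Metric.ball x r,
          ‖u - v‖ ≤ (1 / α) * ‖f u - f v‖ := by
  intro α hα hαreg
  obtain ⟨⟨r₁, hr₁pos, hiso₁⟩, hpos⟩ := hreg
  have hSne : {c : ℝ | ∃ r > 0, c = sInf (conorm '' convexHull ℝ (pjBall Jf x r))}.Nonempty :=
    ⟨_, 1, one_pos, rfl⟩
  rw [regIndex] at hαreg
  obtain ⟨cβ, ⟨r₀, hr₀pos, hcβ⟩, hαβ⟩ := exists_lt_of_lt_csSup hSne hαreg
  set β : ℝ := sInf (conorm '' convexHull ℝ (pjBall Jf x r₀)) with hβdef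
  rw [hcβ] at hαβ
  have hβpos : 0 < β := lt_trans hα hαβ
  obtain ⟨r₂, hr₂pos, hr₂U⟩ := Metric.isOpen_iff.mp hUopen x hx
  set R : ℝ := min r₀ (min r₁ r₂) with hRdef
  have hRpos : 0 < R := lt_min hr₀pos (lt_min hr₁pos hr₂pos)
  have hRr₀ : R ≤ r₀ := min_le_left _ _
  have hRr₁ : R ≤ r₁ := le_trans (min_le_right _ _) (min_le_left _ _)
  have hRr₂ : R ≤ r₂ := le_trans (min_le_right _ _) (min_le_right _ _)
  have hmono : ∀ {r r' : ℝ}, r ≤ r' →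
      convexHull ℝ (pjBall Jf x r) ⊆ convexHull ℝ (pjBall Jf x r') := by
    intro r r' hrr'
    apply convexHull_mono
    exact Set.biUnion_subset_biUnion_left (Metric.ball_subset_ball hrr')
  have hbdd : BddBelow (conorm '' convexHull ℝ (pjBall Jf x r₀)) :=
    ⟨0, fun b hb => by obtain ⟨T, -, rfl⟩ := hb; exact conorm_nonneg T⟩
  have hconorm : ∀ T ∈ convexHull ℝ (pjBall Jf x R), β ≤ conorm T := by
    intro T hT
    exact csInf_le hbdd ⟨T, hmono hRr₀ hT, rfl⟩
  have hiso : ∀ T ∈ convexHull ℝ (pjBall Jf x R), IsBanachIso T := fun T hT =>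
    hiso₁ T (hmono hRr₁ hT)
  have hRU : Metric.ball x R ⊆ U := (Metric.ball_subset_ball hRr₂).trans hr₂U
  set ε : ℝ := (α + β) / 2 with hεdef
  have hαε : α < ε := by rw [hεdef]; linarith
  have hεβ : ε < β := by rw [hεdef]; linarith
  have hεpos : 0 < ε := lt_trans hα hαε
  have hr4 : (0:ℝ) < R / 4 := by linarith
  -- the two-point estimate
  have hest : ∀ u ∈ Metric.ball x (R/4), ∀ v ∈ Metric.ball x (R/4),
      α * ‖u - v‖ ≤ ‖f u - f v‖ := by
    intro u hu v hv
    by_contra hcon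
    push_neg at hcon
    have huv : 0 < ‖u - v‖ := by
      rcases eq_or_ne u v with rfl | hne
      · simp at hcon
      · exact norm_pos_iff.mpr (sub_ne_zero.mpr hne)
    have hdux : dist u x < R/4 := by rw [Metric.mem_ball] at hu; exact hu
    have hdvx : dist v x < R/4 := by rw [Metric.mem_ball] at hv; exact hv
    have hduv : ‖u - v‖ < R/2 := by
      have h1 : dist u v ≤ dist u x + dist x v := dist_triangle u x v
      have h2 : dist x v = dist v x := dist_comm x v
      have h3 : dist u v = ‖u - v‖ := dist_eq_norm u v
      linarith
    have hball : Metric.closedBall v ‖u - v‖ ⊆ Metric.ball x R := by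
      intro z hz
      rw [Metric.mem_closedBall] at hz
      rw [Metric.mem_ball]
      have h1 : dist z x ≤ dist z v + dist v x := dist_triangle z v x
      linarith
    have hy : ‖f v - f u‖ < ε * ‖u - v‖ := by
      rw [norm_sub_rev]
      nlinarith
    obtain ⟨w, hw1, hw2⟩ := surj_aux hf hcrc hRU hiso hconorm hεpos hεβ huv hball hy
    have hwv : ‖w - v‖ < ‖u - v‖ := by
      have h1 : ‖f v - f u‖ / ε < ‖u - v‖ := by
        rw [div_lt_iff₀ hεpos]
        nlinarith
      linarith
    have hwball : w ∈ Metric.ball x R := hball (by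
      rw [Metric.mem_closedBall, dist_eq_norm]; exact hwv.le)
    have huball : u ∈ Metric.ball x R := by
      rw [Metric.mem_ball] at hu ⊢
      linarith
    have : u = w := inj_aux hf hJf hβpos hRU hconorm huball hwball hw2.symm
    rw [← this] at hwv
    exact absurd hwv (lt_irrefl _)
  have hinj : Set.InjOn f (Metric.ball x (R/4)) := by
    intro u hu v hv hfe
    have := hest u hu v hv
    rw [hfe, sub_self, norm_zero] at this
    have : ‖u - v‖ ≤ 0 := by nlinarith
    have : u - v = 0 := norm_le_zero_iff.mp this
    exact sub_eq_zero.mp this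
  have hopen : ∀ W : Set X, W ⊆ Metric.ball x (R/4) → IsOpen W → IsOpen (f '' W) := by
    intro W hW hWopen
    rw [Metric.isOpen_iff]
    rintro yy ⟨z₀, hz₀W, rfl⟩
    obtain ⟨ρ₀, hρ₀pos, hρ₀sub⟩ := Metric.isOpen_iff.mp hWopen z₀ hz₀W
    set ρ : ℝ := ρ₀ / 2 with hρdef
    have hρpos : 0 < ρ := by linarith
    have hρsub : Metric.closedBall z₀ ρ ⊆ W := by
      refine subset_trans ?_ hρ₀sub
      intro z hz
      rw [Metric.mem_closedBall] at hz
      rw [Metric.mem_ball]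
      linarith
    have hballR : Metric.closedBall z₀ ρ ⊆ Metric.ball x R := by
      refine subset_trans hρsub (subset_trans hW ?_)
      exact Metric.ball_subset_ball (by linarith)
    refine ⟨ε * ρ, by positivity, ?_⟩
    intro y hy
    rw [Metric.mem_ball] at hy
    have hy' : ‖f z₀ - y‖ < ε * ρ := by
      rw [show ‖f z₀ - y‖ = dist y (f z₀) by rw [dist_eq_norm, norm_sub_rev]]
      exact hy
    obtain ⟨w, hw1, hw2⟩ := surj_aux hf hcrc hRU hiso hconorm hεpos hεβ hρpos hballR hy'
    refine ⟨w, ?_, hw2⟩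
    apply hρsub
    rw [Metric.mem_closedBall, dist_eq_norm]
    refine hw1.trans ?_
    rw [div_le_iff₀ hεpos]
    nlinarith
  refine ⟨R/4, hr4, ?_, ?_, hopen, hinj, ?_⟩
  · exact (Metric.ball_subset_ball (by linarith)).trans hRU
  · exact hopen _ (subset_refl _) Metric.isOpen_ball
  · intro u hu v hv
    have h := hest u hu v hv
    calc ‖u - v‖ = (1/α) * (α * ‖u - v‖) := by field_simp
      _ ≤ (1/α) * ‖f u - f v‖ := by
          apply mul_le_mul_of_nonneg_left h (by positivity)

end
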